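/- Let 0 < α < 2 < β. Define g₂(λ) = 2α(2−α)λ^β − αβ(β−α)λ² + 2β(β−2)λ^α − (β−α)(β−2)(2−α). Then g₂(λ) ≤ 0 for all λ ∈ (0,1]. -/

import Mathlib

open Real Set

theorem g2_nonpos (α β : ℝ) (hα : 0 < α) (hα2 : α < 2) (hβ : 2 < β) :
    ∀ lam : ℝ, 0 < lam → lam ≤ 1 →
      2 * α * (2 - α) * lam ^ β - α * β * (β - α) * lam ^ (2:ℝ)
        + 2 * β * (β - 2) * lam ^ α - (β - α) * (β - 2) * (2 - α) ≤ 0 := by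
  intro lam hl0 hl1
  have hβα : 0 < β - α := by linarith
  have h2α : 0 < 2 - α := by linarith
  have hβ2 : 0 < β - 2 := by linarith
  set f : ℝ → ℝ := fun x => 2 * α * (2 - α) * x ^ β - α * β * (β - α) * x ^ (2:ℝ)
        + 2 * β * (β - 2) * x ^ α - (β - α) * (β - 2) * (2 - α) with hf
  -- g3 nonneg via weighted AM-GM
  have hg3 : ∀ x : ℝ, 0 < x → x ≤ 1 →
      (β - α) * x ^ (2 - α) ≤ (2 - α) * x ^ (β - α) + (β - 2) := by
    intro x hx0 hx1
    have hw : (2 - α)/(β - α) + (β - 2)/(β - α) = 1 := by field_simp; ring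
    have h := Real.geom_mean_le_arith_mean2_weighted
      (by positivity) (by positivity)
      (le_of_lt (Real.rpow_pos_of_pos hx0 (β - α))) zero_le_one hw
    rw [Real.one_rpow, mul_one] at h
    have hkey : (x ^ (β - α)) ^ ((2 - α)/(β - α)) = x ^ (2 - α) := by
      rw [← Real.rpow_mul hx0.le]
      congr 1
      field_simp
    rw [hkey] at h
    have := mul_le_mul_of_nonneg_left h hβα.le
    calc (β - α) * x ^ (2 - α)
        ≤ (β - α) * ((2 - α)/(β - α) * x ^ (β - α) + (β - 2)/(β - α) * 1) := this
      _ = (2 - α) * x ^ (β - α) + (β - 2) := by field_simp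
  -- derivative
  have hderiv : ∀ x : ℝ, 0 < x → HasDerivAt f
      (2 * α * β * x ^ (α - 1) *
        ((2 - α) * x ^ (β - α) - (β - α) * x ^ (2 - α) + (β - 2))) x := by
    intro x hx
    have h1 : HasDerivAt (fun y : ℝ => y ^ β) (β * x ^ (β - 1)) x :=
      Real.hasDerivAt_rpow_const (Or.inl hx.ne')
    have h2 : HasDerivAt (fun y : ℝ => y ^ (2:ℝ)) (2 * x ^ ((2:ℝ) - 1)) x :=
      Real.hasDerivAt_rpow_const (Or.inl hx.ne')
    have h3 : HasDerivAt (fun y : ℝ => y ^ α) (α * x ^ (α - 1)) x :=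
      Real.hasDerivAt_rpow_const (Or.inl hx.ne')
    have H := (((h1.const_mul (2 * α * (2 - α))).sub
        (h2.const_mul (α * β * (β - α)))).add
        (h3.const_mul (2 * β * (β - 2)))).sub_const ((β - α) * (β - 2) * (2 - α))
    refine H.congr_deriv ?_
    have e1 : x ^ (α - 1) * x ^ (β - α) = x ^ (β - 1) := by
      rw [← Real.rpow_add hx]; ring_nf
    have e2 : x ^ (α - 1) * x ^ (2 - α) = x ^ ((2:ℝ) - 1) := by
      rw [← Real.rpow_add hx]; ring_nf
    rw [← e1, ← e2]; ring
  -- monotone on Icc lam 1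
  have hmono : MonotoneOn f (Icc lam 1) := by
    apply monotoneOn_of_deriv_nonneg (convex_Icc lam 1)
    · intro x hx
      exact (hderiv x (lt_of_lt_of_le hl0 hx.1)).continuousAt.continuousWithinAt
    · intro x hx
      rw [interior_Icc] at hx
      exact (hderiv x (lt_trans hl0 hx.1)).differentiableAt.differentiableWithinAt
    · intro x hx
      rw [interior_Icc] at hx
      have hx0 : 0 < x := lt_trans hl0 hx.1
      rw [(hderiv x hx0).deriv]
      have := hg3 x hx0 hx.2.le
      have hp : (0:ℝ) ≤ 2 * α * β * x ^ (α - 1) := by positivity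
      nlinarith [Real.rpow_pos_of_pos hx0 (α - 1)]
  have h1 : f lam ≤ f 1 := hmono ⟨le_refl lam, hl1⟩ ⟨hl1, le_refl 1⟩ hl1
  have hf1 : f 1 = 0 := by
    simp only [hf, Real.one_rpow]
    ring
  calc 2 * α * (2 - α) * lam ^ β - α * β * (β - α) * lam ^ (2:ℝ)
        + 2 * β * (β - 2) * lam ^ α - (β - α) * (β - 2) * (2 - α) = f lam := rfl
    _ ≤ f 1 := h1
    _ = 0 := hf1
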